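/- Let t, λ̌ ∈ ℂ with Im(t) > 0, Re(λ̌) > 0, and suppose w = e^{2πit/λ̌} and q̃ = e^{2πi/λ̌} satisfy |w| < 1, |q̃| < 1. Then ∑_{k=0}^∞ ( Li₂(w·q̃^k) + log(w·q̃^k)·log(1 - w·q̃^k) ) = ∑_{l=1}^∞ (w^l/(l·(1-q̃^l)))·( 1/l - q̃^l·log(q̃)/(1-q̃^l) - log w ) = -∑_{l=1}^∞ ∂/∂l ( w^l/(l(1-q̃^l)) ), where log w = 2πit/λ̌ and log q̃ = 2πi/λ̌. -/

import Mathlib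

open Complex
set_option maxHeartbeats 1000000

/-- The dilogarithm `Li₂(z) = ∑_{n≥1} z^n/n²`. -/
noncomputable def Li2 (z : ℂ) : ℂ := ∑' n : ℕ, z ^ (n + 1) / ((n : ℂ) + 1) ^ 2

lemma hasSum_neg_log {z : ℂ} (hz : ‖z‖ < 1) :
    HasSum (fun l : ℕ => z ^ (l + 1) / ((l : ℂ) + 1)) (-Complex.log (1 - z)) := by
  have h := Complex.hasSum_taylorSeries_neg_log hz
  have h2 := (hasSum_nat_add_iff' (f := fun n : ℕ => z ^ n / (n : ℂ)) 1).mpr h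
  simpa using h2

lemma summable_Li2 {z : ℂ} (hz : ‖z‖ < 1) :
    Summable (fun l : ℕ => z ^ (l + 1) / ((l : ℂ) + 1) ^ 2) := by
  apply Summable.of_norm
  have hg : Summable (fun l : ℕ => ‖z‖ ^ (l + 1)) := by
    simpa [pow_succ] using (summable_geometric_of_lt_one (norm_nonneg z) hz).mul_right ‖z‖
  refine hg.of_nonneg_of_le (fun l => norm_nonneg _) (fun l => ?_)
  rw [norm_div, norm_pow, norm_pow]
  refine div_le_self (by positivity) ?_
  have h1 : (1 : ℝ) ≤ ‖(l : ℂ) + 1‖ := by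
    rw [show ((l : ℂ) + 1) = ((l + 1 : ℕ) : ℂ) by push_cast; ring, Complex.norm_natCast]
    exact_mod_cast Nat.one_le_iff_ne_zero.mpr (Nat.succ_ne_zero l)
  nlinarith

lemma hasSum_Li2 {z : ℂ} (hz : ‖z‖ < 1) :
    HasSum (fun l : ℕ => z ^ (l + 1) / ((l : ℂ) + 1) ^ 2) (Li2 z) :=
  (summable_Li2 hz).hasSum

lemma norm_nat_add_one (l : ℕ) : (1 : ℝ) ≤ ‖(l : ℂ) + 1‖ := by
  rw [show ((l : ℂ) + 1) = ((l + 1 : ℕ) : ℂ) by push_cast; ring, Complex.norm_natCast]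
  exact_mod_cast Nat.one_le_iff_ne_zero.mpr (Nat.succ_ne_zero l)


lemma alg1 (W Q D L a b : ℂ) (hL : L ≠ 0) (hD : D ≠ 0) :
    W / (L * D) * (1 / L - Q * b / D - a)
      = W * (1 / L ^ 2 - a / L) * D⁻¹ + (-(W * b / L)) * (Q / D ^ 2) := by
  ring

lemma key1 (a b w q : ℂ) (hw : ‖w‖ < 1) (hq : ‖q‖ < 1) :
    (∑' k : ℕ, (Li2 (w * q ^ k) + (a + (k : ℂ) * b) * Complex.log (1 - w * q ^ k))
      = ∑' l : ℕ, (w ^ (l + 1) / (((l : ℂ) + 1) * (1 - q ^ (l + 1)))) *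
          (1 / ((l : ℂ) + 1) - q ^ (l + 1) * b / (1 - q ^ (l + 1)) - a)) := by
  set F : ℕ × ℕ → ℂ := fun p =>
    (w * q ^ p.1) ^ (p.2 + 1) *
      (1 / ((p.2 : ℂ) + 1) ^ 2 - (a + (p.1 : ℂ) * b) / ((p.2 : ℂ) + 1)) with hFdef
  -- Summability of the double series
  have hFsum : Summable F := by
    apply Summable.of_norm
    have h2 : Summable (fun k : ℕ => (k : ℝ) * ‖q‖ ^ k * ‖b‖) := by
      have : Summable (fun k : ℕ => (k : ℝ) ^ 1 * ‖q‖ ^ k) :=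
        summable_pow_mul_geometric_of_norm_lt_one 1
          (by rwa [Real.norm_of_nonneg (norm_nonneg q)])
      simpa using this.mul_right ‖b‖
    have h1 : Summable (fun k : ℕ => ‖q‖ ^ k * (1 + ‖a‖)) :=
      (summable_geometric_of_lt_one (norm_nonneg q) hq).mul_right _
    have hh : Summable (fun k : ℕ => ‖q‖ ^ k * (1 + ‖a‖ + k * ‖b‖)) :=
      (h1.add h2).congr (fun k => by ring)
    have hg : Summable (fun l : ℕ => ‖w‖ ^ (l + 1)) := by
      simpa [pow_succ] using (summable_geometric_of_lt_one (norm_nonneg w) hw).mul_right ‖w‖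
    have hprod : Summable (fun p : ℕ × ℕ =>
        (‖q‖ ^ p.1 * (1 + ‖a‖ + p.1 * ‖b‖)) * ‖w‖ ^ (p.2 + 1)) :=
      hh.mul_of_nonneg hg (fun k => by positivity) (fun l => by positivity)
    refine hprod.of_nonneg_of_le (fun p => norm_nonneg _) (fun p => ?_)
    obtain ⟨k, l⟩ := p
    have hl1 : (1 : ℝ) ≤ ‖(l : ℂ) + 1‖ := norm_nat_add_one l
    have e1 : ‖(w * q ^ k) ^ (l + 1)‖ ≤ ‖q‖ ^ k * ‖w‖ ^ (l + 1) := by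
      rw [norm_pow, norm_mul, norm_pow, mul_pow, ← pow_mul]
      have hle : ‖q‖ ^ (k * (l + 1)) ≤ ‖q‖ ^ k :=
        pow_le_pow_of_le_one (norm_nonneg q) hq.le (Nat.le_mul_of_pos_right k (Nat.succ_pos l))
      calc ‖w‖ ^ (l + 1) * ‖q‖ ^ (k * (l + 1))
          ≤ ‖w‖ ^ (l + 1) * ‖q‖ ^ k := by
            exact mul_le_mul_of_nonneg_left hle (by positivity)
        _ = ‖q‖ ^ k * ‖w‖ ^ (l + 1) := by ring
    have e2 : ‖1 / ((l : ℂ) + 1) ^ 2 - (a + (k : ℂ) * b) / ((l : ℂ) + 1)‖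
        ≤ 1 + ‖a‖ + k * ‖b‖ := by
      have p1 : ‖1 / ((l : ℂ) + 1) ^ 2‖ ≤ 1 := by
        rw [norm_div, norm_one, norm_pow]
        exact div_le_one_of_le₀ (by nlinarith) (by positivity)
      have p2 : ‖(a + (k : ℂ) * b) / ((l : ℂ) + 1)‖ ≤ ‖a‖ + k * ‖b‖ := by
        rw [norm_div]
        calc ‖a + (k : ℂ) * b‖ / ‖(l : ℂ) + 1‖ ≤ ‖a + (k : ℂ) * b‖ / 1 := by
              gcongr
          _ = ‖a + (k : ℂ) * b‖ := div_one _
          _ ≤ ‖a‖ + ‖(k : ℂ) * b‖ := norm_add_le _ _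
          _ = ‖a‖ + k * ‖b‖ := by rw [norm_mul, Complex.norm_natCast]
      calc ‖1 / ((l : ℂ) + 1) ^ 2 - (a + (k : ℂ) * b) / ((l : ℂ) + 1)‖
          ≤ ‖1 / ((l : ℂ) + 1) ^ 2‖ + ‖(a + (k : ℂ) * b) / ((l : ℂ) + 1)‖ := norm_sub_le _ _
        _ ≤ 1 + (‖a‖ + k * ‖b‖) := add_le_add p1 p2
        _ = 1 + ‖a‖ + k * ‖b‖ := by ring
    simp only [hFdef]
    rw [norm_mul]
    calc ‖(w * q ^ k) ^ (l + 1)‖ * ‖1 / ((l : ℂ) + 1) ^ 2 - (a + (k : ℂ) * b) / ((l : ℂ) + 1)‖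
        ≤ (‖q‖ ^ k * ‖w‖ ^ (l + 1)) * (1 + ‖a‖ + k * ‖b‖) :=
          mul_le_mul e1 e2 (norm_nonneg _) (by positivity)
      _ = (‖q‖ ^ k * (1 + ‖a‖ + k * ‖b‖)) * ‖w‖ ^ (l + 1) := by ring
  -- Fiberwise sums over l (computing the k-th term of the LHS)
  have hK : ∀ k : ℕ, HasSum (fun l => F (k, l))
      (Li2 (w * q ^ k) + (a + (k : ℂ) * b) * Complex.log (1 - w * q ^ k)) := by
    intro k
    have hz : ‖w * q ^ k‖ < 1 := by
      rw [norm_mul, norm_pow]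
      calc ‖w‖ * ‖q‖ ^ k ≤ ‖w‖ * 1 :=
            mul_le_mul_of_nonneg_left (pow_le_one₀ (norm_nonneg q) hq.le) (norm_nonneg w)
        _ = ‖w‖ := mul_one _
        _ < 1 := hw
    have h3 := (hasSum_Li2 hz).add ((hasSum_neg_log hz).mul_left (-(a + (k : ℂ) * b)))
    rw [neg_mul_neg] at h3
    convert h3 using 1
    funext l
    simp only [hFdef]
    ring
  -- Fiberwise sums over k (computing the l-th term of the RHS)
  have hL : ∀ l : ℕ, HasSum (fun k => F (k, l))
      ((w ^ (l + 1) / (((l : ℂ) + 1) * (1 - q ^ (l + 1)))) *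
        (1 / ((l : ℂ) + 1) - q ^ (l + 1) * b / (1 - q ^ (l + 1)) - a)) := by
    intro l
    have hQ : ‖q ^ (l + 1)‖ < 1 := by
      rw [norm_pow]
      calc ‖q‖ ^ (l + 1) ≤ ‖q‖ := pow_le_of_le_one (norm_nonneg q) hq.le (Nat.succ_ne_zero l)
        _ < 1 := hq
    have hQ1 : (1 : ℂ) - q ^ (l + 1) ≠ 0 := by
      intro h
      have hq1 : q ^ (l + 1) = 1 := by linear_combination -h
      rw [hq1] at hQ
      simp at hQ
    have hl0 : ((l : ℂ) + 1) ≠ 0 := Nat.cast_add_one_ne_zero l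
    have hgeo := (hasSum_geometric_of_norm_lt_one hQ).mul_left
      (w ^ (l + 1) * (1 / ((l : ℂ) + 1) ^ 2 - a / ((l : ℂ) + 1)))
    have hk2 := (hasSum_coe_mul_geometric_of_norm_lt_one hQ).mul_left
      (-(w ^ (l + 1) * b / ((l : ℂ) + 1)))
    have h := hgeo.add hk2
    have hfun : (fun k : ℕ => F (k, l)) = fun k : ℕ =>
        (w ^ (l + 1) * (1 / ((l : ℂ) + 1) ^ 2 - a / ((l : ℂ) + 1))) * (q ^ (l + 1)) ^ k
          + (-(w ^ (l + 1) * b / ((l : ℂ) + 1))) * ((k : ℂ) * (q ^ (l + 1)) ^ k) := by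
      funext k
      simp only [hFdef]
      have hpow : (w * q ^ k) ^ (l + 1) = w ^ (l + 1) * (q ^ (l + 1)) ^ k := by
        rw [mul_pow, ← pow_mul, ← pow_mul, mul_comm k (l + 1)]
      rw [hpow]
      ring
    have hval : (w ^ (l + 1) / (((l : ℂ) + 1) * (1 - q ^ (l + 1)))) *
        (1 / ((l : ℂ) + 1) - q ^ (l + 1) * b / (1 - q ^ (l + 1)) - a)
        = (w ^ (l + 1) * (1 / ((l : ℂ) + 1) ^ 2 - a / ((l : ℂ) + 1))) * (1 - q ^ (l + 1))⁻¹
          + (-(w ^ (l + 1) * b / ((l : ℂ) + 1))) * (q ^ (l + 1) / (1 - q ^ (l + 1)) ^ 2) :=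
      alg1 _ _ _ _ _ _ hl0 hQ1
    rw [hfun, hval]
    exact h
  -- Assemble
  have hLHS : HasSum (fun k : ℕ =>
      Li2 (w * q ^ k) + (a + (k : ℂ) * b) * Complex.log (1 - w * q ^ k)) (∑' p, F p) :=
    hFsum.hasSum.prod_fiberwise hK
  have hGsum : Summable (fun p : ℕ × ℕ => F (p.2, p.1)) :=
    ((Equiv.prodComm ℕ ℕ).summable_iff).mpr hFsum
  have htG : (∑' p : ℕ × ℕ, F (p.2, p.1)) = ∑' p, F p := (Equiv.prodComm ℕ ℕ).tsum_eq F
  have hRHS : HasSum (fun l : ℕ =>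
      (w ^ (l + 1) / (((l : ℂ) + 1) * (1 - q ^ (l + 1)))) *
        (1 / ((l : ℂ) + 1) - q ^ (l + 1) * b / (1 - q ^ (l + 1)) - a)) (∑' p, F p) := by
    have h := hGsum.hasSum.prod_fiberwise (fun l => hL l)
    rwa [htG] at h
  exact hLHS.tsum_eq.trans hRHS.tsum_eq.symm


lemma key2 (a b : ℂ) (l : ℕ) (hq : ‖exp b‖ < 1) :
    (exp a ^ (l + 1) / (((l : ℂ) + 1) * (1 - exp b ^ (l + 1)))) *
      (1 / ((l : ℂ) + 1) - exp b ^ (l + 1) * b / (1 - exp b ^ (l + 1)) - a)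
    = -(deriv (fun x : ℝ => exp ((x : ℂ) * a) / ((x : ℂ) * (1 - exp ((x : ℂ) * b))))
        ((l : ℝ) + 1)) := by
  set z : ℂ := (l : ℂ) + 1 with hzdef
  have hl0 : z ≠ 0 := Nat.cast_add_one_ne_zero l
  have hz : (((l : ℝ) + 1 : ℝ) : ℂ) = z := by push_cast; ring
  have hcast : z = ((l + 1 : ℕ) : ℂ) := by push_cast; ring
  have hQeq : exp (z * b) = exp b ^ (l + 1) := by
    rw [hcast, ← Complex.exp_nat_mul]
  have hWeq : exp (z * a) = exp a ^ (l + 1) := by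
    rw [hcast, ← Complex.exp_nat_mul]
  have hQ : ‖exp b ^ (l + 1)‖ < 1 := by
    rw [norm_pow]
    calc ‖exp b‖ ^ (l + 1) ≤ ‖exp b‖ :=
          pow_le_of_le_one (norm_nonneg _) hq.le (Nat.succ_ne_zero l)
      _ < 1 := hq
  have hQ1 : (1 : ℂ) - exp (z * b) ≠ 0 := by
    rw [hQeq]
    intro h
    have h1 : exp b ^ (l + 1) = 1 := by linear_combination -h
    rw [h1] at hQ
    simp at hQ
  have hden0 : z * (1 - exp (z * b)) ≠ 0 := mul_ne_zero hl0 hQ1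
  -- derivative of the numerator
  have hnum : HasDerivAt (fun y : ℂ => exp (y * a)) (exp (z * a) * a) z := by
    simpa using ((hasDerivAt_id z).mul_const a).cexp
  -- derivative of the denominator
  have hden : HasDerivAt (fun y : ℂ => y * (1 - exp (y * b)))
      (1 * (1 - exp (z * b)) + z * -(exp (z * b) * (1 * b))) z := by
    have h1 : HasDerivAt (fun y : ℂ => 1 - exp (y * b)) (-(exp (z * b) * (1 * b))) z :=
      (((hasDerivAt_id z).mul_const b).cexp).const_sub 1
    exact (hasDerivAt_id z).mul h1
  have hdiv := hnum.div hden hden0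
  rw [← hz] at hdiv
  have hreal := hdiv.comp_ofReal
  replace hreal : HasDerivAt (fun x : ℝ => exp ((x : ℂ) * a) / ((x : ℂ) * (1 - exp ((x : ℂ) * b)))) _ ((l : ℝ) + 1) := hreal
  rw [hreal.deriv, hz, hQeq, hWeq]
  have hQ1' : (1 : ℂ) - exp b ^ (l + 1) ≠ 0 := by rwa [hQeq] at hQ1
  have halg : ∀ W Q L : ℂ, L ≠ 0 → (1 : ℂ) - Q ≠ 0 →
      W / (L * (1 - Q)) * (1 / L - Q * b / (1 - Q) - a)
        = -((W * a * (L * (1 - Q)) - W * (1 * (1 - Q) + L * -(Q * (1 * b))))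
            / (L * (1 - Q)) ^ 2) := by
    intro W Q L hL hD
    field_simp
    ring
  exact halg _ _ _ hl0 hQ1'

/-- With `w = e^{2πit/λ̌}`, `q̃ = e^{2πi/λ̌}`, `log w = 2πit/λ̌`, `log q̃ = 2πi/λ̌`, assuming
`Im(t) > 0`, `Re(λ̌) > 0`, `|w| < 1`, `|q̃| < 1`:
`∑_{k=0}^∞ ( Li₂(w·q̃^k) + log(w·q̃^k)·log(1 - w·q̃^k) )
  = ∑_{l=1}^∞ (w^l/(l·(1-q̃^l)))·( 1/l - q̃^l·log(q̃)/(1-q̃^l) - log w )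
  = -∑_{l=1}^∞ ∂/∂l ( w^l/(l(1-q̃^l)) )`,
where `∂/∂l` differentiates `l ↦ e^{l·log w}/(l·(1-e^{l·log q̃}))` in the real variable `l`. -/
theorem sum_of_stokes_jumps (t lm : ℂ) (ht : 0 < t.im) (hlm : 0 < lm.re)
    (hw : ‖exp (2 * Real.pi * I * t / lm)‖ < 1)
    (hq : ‖exp (2 * Real.pi * I / lm)‖ < 1) :
    (∑' k : ℕ, (Li2 (exp (2 * Real.pi * I * t / lm) * exp (2 * Real.pi * I / lm) ^ k)
        + (2 * Real.pi * I * t / lm + (k : ℂ) * (2 * Real.pi * I / lm))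
          * Complex.log (1 - exp (2 * Real.pi * I * t / lm) * exp (2 * Real.pi * I / lm) ^ k))
      = ∑' l : ℕ, (exp (2 * Real.pi * I * t / lm) ^ (l + 1)
            / (((l : ℂ) + 1) * (1 - exp (2 * Real.pi * I / lm) ^ (l + 1))))
          * (1 / ((l : ℂ) + 1)
              - exp (2 * Real.pi * I / lm) ^ (l + 1) * (2 * Real.pi * I / lm)
                  / (1 - exp (2 * Real.pi * I / lm) ^ (l + 1))
              - 2 * Real.pi * I * t / lm))
    ∧ (∑' l : ℕ, (exp (2 * Real.pi * I * t / lm) ^ (l + 1)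
            / (((l : ℂ) + 1) * (1 - exp (2 * Real.pi * I / lm) ^ (l + 1))))
          * (1 / ((l : ℂ) + 1)
              - exp (2 * Real.pi * I / lm) ^ (l + 1) * (2 * Real.pi * I / lm)
                  / (1 - exp (2 * Real.pi * I / lm) ^ (l + 1))
              - 2 * Real.pi * I * t / lm)
      = -∑' l : ℕ, deriv (fun x : ℝ =>
            exp ((x : ℂ) * (2 * Real.pi * I * t / lm))
              / ((x : ℂ) * (1 - exp ((x : ℂ) * (2 * Real.pi * I / lm))))) ((l : ℝ) + 1)) := by
  constructor
  · exact key1 (2 * Real.pi * I * t / lm) (2 * Real.pi * I / lm) _ _ hw hq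
  · rw [← tsum_neg]
    exact tsum_congr fun l => key2 (2 * Real.pi * I * t / lm) (2 * Real.pi * I / lm) l hq
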